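/- arXiv:1805.10027 — 2 statements merged into one kernel-verified Lean document; each statement's English description precedes it below -/
import Mathlib

section
/- If X and Y are independent nonnegative random variables with regularly varying tails, namely lim_{t→∞} t^α P(X > t) = c₁ > 0 and lim_{t→∞} t^β P(Y > t) = c₂ > 0 where 0 < α < β < 1, then lim_{t→∞} t^α P(X + Y > t) = c₁; i.e., the sum X + Y is heavy-tailed with the smaller index α and the same tail constant as X. -/
open MeasureTheory ProbabilityTheory Filter Set
open scoped ENNReal Topology

/-- If `X` and `Y` are independent positive random variables with regularly varying
tails of indices `α < β`, then `X + Y` has a regularly varying tail of index `α`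
with the same tail constant `c₁` as `X`. -/
theorem sum_heavyTailed_min_index
    {Ω : Type*} [MeasureSpace Ω] [IsProbabilityMeasure (ℙ : Measure Ω)]
    (X Y : Ω → ℝ) (hXm : Measurable X) (hYm : Measurable Y)
    (hindep : IndepFun X Y ℙ)
    (α β c₁ c₂ : ℝ) (hα : 0 < α) (hβ : β < 1) (hαβ : α < β)
    (hc₁ : 0 < c₁) (hc₂ : 0 < c₂)
    (hXpos : ∀ᵐ ω ∂ℙ, 0 < X ω) (hYpos : ∀ᵐ ω ∂ℙ, 0 < Y ω)
    (hXtail : Tendsto (fun t : ℝ => t ^ α * (ℙ {ω | t < X ω}).toReal) atTop (𝓝 c₁))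
    (hYtail : Tendsto (fun t : ℝ => t ^ β * (ℙ {ω | t < Y ω}).toReal) atTop (𝓝 c₂)) :
    Tendsto (fun t : ℝ => t ^ α * (ℙ {ω | t < X ω + Y ω}).toReal) atTop (𝓝 c₁) := by
  rw [tendsto_order]
  constructor
  · -- lower bound: P(X+Y>t) ≥ P(X>t)
    intro a ha
    have h1 : ∀ᶠ t in atTop, a < t ^ α * (ℙ {ω | t < X ω}).toReal :=
      hXtail.eventually_const_lt ha
    filter_upwards [h1, eventually_ge_atTop (0 : ℝ)] with t ht ht0
    refine lt_of_lt_of_le ht ?_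
    have hmono : ℙ {ω | t < X ω} ≤ ℙ {ω | t < X ω + Y ω} := by
      apply measure_mono_ae
      filter_upwards [hYpos] with ω hω hX
      exact lt_of_lt_of_le hX (le_add_of_nonneg_right hω.le)
    exact mul_le_mul_of_nonneg_left
      (ENNReal.toReal_mono (measure_ne_top _ _) hmono) (Real.rpow_nonneg ht0 α)
  · -- upper bound
    intro a ha
    have haa : 0 < a := hc₁.trans ha
    set r : ℝ := (c₁ / a) ^ (1 / α) with hr
    have hdiv : 0 < c₁ / a := div_pos hc₁ haa
    have hc₁a : c₁ / a < 1 := (div_lt_one haa).2 ha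
    have hrpos : 0 < r := Real.rpow_pos_of_pos hdiv _
    have hrlt : r < 1 := Real.rpow_lt_one hdiv.le hc₁a (by positivity)
    set ε : ℝ := (1 - r) / 2 with hεdef
    have hε0 : 0 < ε := by simp only [hεdef]; linarith
    have h1ε : 0 < 1 - ε := by simp only [hεdef]; linarith
    have hrε : r < 1 - ε := by simp only [hεdef]; linarith
    have hrα : r ^ α = c₁ / a := by
      rw [hr, ← Real.rpow_mul hdiv.le, one_div, inv_mul_cancel₀ hα.ne', Real.rpow_one]
    -- key: (1-ε)^(-α) * c₁ < a
    have hkey : (1 - ε) ^ (-α) * c₁ < a := by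
      have h1 : c₁ / a < (1 - ε) ^ α := by
        rw [← hrα]; exact Real.rpow_lt_rpow hrpos.le hrε hα
      have hpow : 0 < (1 - ε) ^ α := Real.rpow_pos_of_pos h1ε α
      rw [Real.rpow_neg h1ε.le]
      rw [div_lt_iff₀ haa] at h1
      rw [inv_mul_lt_iff₀ hpow]
      nlinarith
    -- limit A : t^α * P(X > (1-ε)t) → (1-ε)^(-α) * c₁
    have hmulX : Tendsto (fun t : ℝ => (1 - ε) * t) atTop atTop :=
      Tendsto.const_mul_atTop h1ε tendsto_id
    have hA0 : Tendsto (fun t : ℝ =>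
        ((1 - ε) * t) ^ α * (ℙ {ω | (1 - ε) * t < X ω}).toReal) atTop (𝓝 c₁) :=
      hXtail.comp hmulX
    have hA : Tendsto (fun t : ℝ =>
        t ^ α * (ℙ {ω | (1 - ε) * t < X ω}).toReal) atTop (𝓝 ((1 - ε) ^ (-α) * c₁)) := by
      have := hA0.const_mul ((1 - ε) ^ (-α))
      refine this.congr' ?_
      filter_upwards [eventually_ge_atTop (0 : ℝ)] with t ht0
      rw [Real.mul_rpow h1ε.le ht0, Real.rpow_neg h1ε.le]
      have hne : (1 - ε) ^ α ≠ 0 := (Real.rpow_pos_of_pos h1ε α).ne'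
      field_simp
    -- limit B : t^α * P(Y > εt) → 0
    have hmulY : Tendsto (fun t : ℝ => ε * t) atTop atTop :=
      Tendsto.const_mul_atTop hε0 tendsto_id
    have hB0 : Tendsto (fun t : ℝ =>
        (ε * t) ^ β * (ℙ {ω | ε * t < Y ω}).toReal) atTop (𝓝 c₂) :=
      hYtail.comp hmulY
    have hpowαβ : Tendsto (fun t : ℝ => t ^ (α - β)) atTop (𝓝 0) := by
      have := tendsto_rpow_neg_atTop (y := β - α) (by linarith)
      simpa [neg_sub] using this
    have hB : Tendsto (fun t : ℝ =>
        t ^ α * (ℙ {ω | ε * t < Y ω}).toReal) atTop (𝓝 0) := by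
      have h := (hpowαβ.mul ((hB0.const_mul (ε ^ (-β))))) 
      rw [zero_mul] at h
      refine h.congr' ?_
      filter_upwards [eventually_gt_atTop (0 : ℝ)] with t ht0
      rw [Real.mul_rpow hε0.le ht0.le, Real.rpow_neg hε0.le]
      have hne : ε ^ β ≠ 0 := (Real.rpow_pos_of_pos hε0 β).ne'
      have htαβ : t ^ (α - β) * t ^ β = t ^ α := by
        rw [← Real.rpow_add ht0]; ring_nf
      field_simp
      linear_combination (ℙ {ω | ε * t < Y ω}).toReal * htαβ
    -- eventually the sum bounds t^α P(X+Y>t), and the sum is eventually < a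
    have hAB : Tendsto (fun t : ℝ =>
        t ^ α * (ℙ {ω | (1 - ε) * t < X ω}).toReal
          + t ^ α * (ℙ {ω | ε * t < Y ω}).toReal) atTop (𝓝 ((1 - ε) ^ (-α) * c₁)) := by
      simpa using hA.add hB
    have hev : ∀ᶠ t in atTop,
        t ^ α * (ℙ {ω | (1 - ε) * t < X ω}).toReal
          + t ^ α * (ℙ {ω | ε * t < Y ω}).toReal < a :=
      hAB.eventually_lt_const hkey
    filter_upwards [hev, eventually_ge_atTop (0 : ℝ)] with t ht ht0
    refine lt_of_le_of_lt ?_ ht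
    have hsub : {ω | t < X ω + Y ω} ⊆ {ω | (1 - ε) * t < X ω} ∪ {ω | ε * t < Y ω} := by
      intro ω hω
      simp only [mem_setOf_eq] at hω
      rcases lt_or_ge ((1 - ε) * t) (X ω) with h1 | h1
      · exact Or.inl h1
      rcases lt_or_ge (ε * t) (Y ω) with h2 | h2
      · exact Or.inr h2
      exfalso; nlinarith
    have hmeas : ℙ {ω | t < X ω + Y ω}
        ≤ ℙ {ω | (1 - ε) * t < X ω} + ℙ {ω | ε * t < Y ω} :=
      (measure_mono hsub).trans (measure_union_le _ _)
    have htr : (ℙ {ω | t < X ω + Y ω}).toReal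
        ≤ (ℙ {ω | (1 - ε) * t < X ω}).toReal + (ℙ {ω | ε * t < Y ω}).toReal := by
      rw [← ENNReal.toReal_add (measure_ne_top _ _) (measure_ne_top _ _)]
      exact ENNReal.toReal_mono
        (ENNReal.add_ne_top.2 ⟨measure_ne_top _ _, measure_ne_top _ _⟩) hmeas
    calc t ^ α * (ℙ {ω | t < X ω + Y ω}).toReal
        ≤ t ^ α * ((ℙ {ω | (1 - ε) * t < X ω}).toReal + (ℙ {ω | ε * t < Y ω}).toReal) :=
          mul_le_mul_of_nonneg_left htr (Real.rpow_nonneg ht0 α)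
      _ = _ := by ring
end

section
/- With ν_L as above (the image of ν ⊗ μ under (t,u) ↦ tu), the measure ν_{(L,S)} on (ℝ^d \ {0}) × (0,∞) defined as the image of ν ⊗ μ under (t,u) ↦ (tu, t) is a Lévy measure on ℝ^{d+1}: ∫ min(‖x‖² + s², 1) dν_{(L,S)}(x,s) < ∞; moreover its marginal on the first coordinate is ν_L and its marginal on the second coordinate is ν. -/
open MeasureTheory Filter Set
open scoped ENNReal Topology

/-- The image of `ν ⊗ μ` under `(t,u) ↦ (t • u, t)` is a Lévy measure on `ℝ^{d+1}`
whose first marginal is the spatial Lévy measure `ν_L` (the image of `ν ⊗ μ` under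
`(t,u) ↦ t • u`) and whose second marginal is `ν`. -/
theorem joint_levy_measure_marginals
    (d : ℕ) (hd : 1 ≤ d) (α : ℝ) (hα : 0 < α) (hα1 : α < 1)
    (μ : Measure (EuclideanSpace ℝ (Fin d))) [IsProbabilityMeasure μ]
    (hμ : ∀ᵐ u ∂μ, ‖u‖ = 1)
    (ν : Measure ℝ)
    (hν : ν = (volume.restrict (Ioi (0 : ℝ))).withDensity
      (fun t => ENNReal.ofReal (α * t ^ (-α - 1) / Real.Gamma (1 - α))))
    (νL : Measure (EuclideanSpace ℝ (Fin d)))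
    (hνL : νL = Measure.map
      (fun p : ℝ × EuclideanSpace ℝ (Fin d) => p.1 • p.2) (ν.prod μ))
    (νLS : Measure (EuclideanSpace ℝ (Fin d) × ℝ))
    (hνLS : νLS = Measure.map
      (fun p : ℝ × EuclideanSpace ℝ (Fin d) => (p.1 • p.2, p.1)) (ν.prod μ)) :
    (∫⁻ q, ENNReal.ofReal (min (‖q.1‖ ^ 2 + q.2 ^ 2) 1) ∂νLS) < ⊤ ∧
      Measure.map Prod.fst νLS = νL ∧ Measure.map Prod.snd νLS = ν := by
  have hΓ : 0 < Real.Gamma (1 - α) := Real.Gamma_pos_of_pos (by linarith)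
  have hνsf : SigmaFinite ν := by rw [hν]; infer_instance
  have hT : Measurable (fun p : ℝ × EuclideanSpace ℝ (Fin d) => (p.1 • p.2, p.1)) :=
    ((measurable_fst.smul measurable_snd).prodMk measurable_fst)
  refine ⟨?_, ?_, ?_⟩
  · -- finiteness
    rw [hνLS, lintegral_map (by fun_prop) hT]
    have hae : ∀ᵐ p : ℝ × EuclideanSpace ℝ (Fin d) ∂(ν.prod μ), ‖p.2‖ = 1 := by
      rw [ae_iff]
      have hnull : (ν.prod μ) ((univ : Set ℝ) ×ˢ {u : EuclideanSpace ℝ (Fin d) | ¬ ‖u‖ = 1}) = 0 := by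
        refine le_antisymm ?_ bot_le
        calc (ν.prod μ) ((univ : Set ℝ) ×ˢ {u : EuclideanSpace ℝ (Fin d) | ¬ ‖u‖ = 1})
            ≤ ν univ * μ {u : EuclideanSpace ℝ (Fin d) | ¬ ‖u‖ = 1} := (Measure.prod_prod _ _).le
          _ = 0 := by rw [ae_iff] at hμ; rw [hμ, mul_zero]
      refine measure_mono_null (fun p hp => ?_) hnull
      exact mem_prod.2 ⟨mem_univ p.1, hp⟩
    have : (∫⁻ p : ℝ × EuclideanSpace ℝ (Fin d),
        ENNReal.ofReal (min (‖p.1 • p.2‖ ^ 2 + p.1 ^ 2) 1) ∂(ν.prod μ))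
        = ∫⁻ p : ℝ × EuclideanSpace ℝ (Fin d),
        ENNReal.ofReal (min (p.1 ^ 2 + p.1 ^ 2) 1) ∂(ν.prod μ) := by
      refine lintegral_congr_ae ?_
      filter_upwards [hae] with p hp
      rw [norm_smul, hp, mul_one, Real.norm_eq_abs, sq_abs]
    rw [this]
    rw [lintegral_prod _ (by fun_prop)]
    simp only [lintegral_const, measure_univ, mul_one]
    rw [hν, lintegral_withDensity_eq_lintegral_mul _ (by fun_prop) (by fun_prop)]
    have hcongr : ∫⁻ t in Ioi (0:ℝ),
        (ENNReal.ofReal (α * t ^ (-α - 1) / Real.Gamma (1 - α)) *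
          ENNReal.ofReal (min (t ^ 2 + t ^ 2) 1))
        = ∫⁻ t in Ioi (0:ℝ),
        ENNReal.ofReal ((α * t ^ (-α - 1) / Real.Gamma (1 - α)) * min (t ^ 2 + t ^ 2) 1) := by
      refine setLIntegral_congr_fun measurableSet_Ioi (fun t ht => ?_)
      have ht' : (0:ℝ) < t := ht
      rw [ENNReal.ofReal_mul (by positivity)]
    simp only [Pi.mul_apply]
    rw [hcongr]
    set h : ℝ → ℝ := fun t => (α * t ^ (-α - 1) / Real.Gamma (1 - α)) * min (t ^ 2 + t ^ 2) 1
      with hh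
    have hmeas : Measurable h := by fun_prop
    have hint : IntegrableOn h (Ioi 0) volume := by
      rw [← Ioc_union_Ioi_eq_Ioi (zero_le_one (α := ℝ))]
      refine IntegrableOn.union ?_ ?_
      · -- on Ioc 0 1 bound by C * t^(1-α)
        have hbase : IntegrableOn (fun t : ℝ => (2 * α / Real.Gamma (1 - α)) * t ^ (1 - α))
            (Ioc 0 1) volume := by
          refine Integrable.const_mul ?_ _
          have := intervalIntegral.intervalIntegrable_rpow' (a := 0) (b := 1)
            (r := 1 - α) (by linarith)
          rwa [intervalIntegrable_iff_integrableOn_Ioc_of_le zero_le_one] at this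
        refine Integrable.mono' hbase hmeas.aestronglyMeasurable ?_
        filter_upwards [ae_restrict_mem measurableSet_Ioc] with t ht
        have ht0 : 0 < t := ht.1
        have hrw : t ^ (-α - 1) * (t ^ 2 + t ^ 2) = 2 * t ^ (1 - α) := by
          have h2 : (t : ℝ) ^ (2 : ℕ) = t ^ ((2 : ℕ) : ℝ) := (Real.rpow_natCast t 2).symm
          rw [show t ^ 2 + t ^ 2 = 2 * t ^ (2:ℕ) by ring, h2,
            ← mul_assoc, mul_comm (t ^ (-α-1)) 2, mul_assoc, ← Real.rpow_add ht0]
          norm_num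
          congr 1
          ring
        have hnn : 0 ≤ h t := by
          apply mul_nonneg
          · positivity
          · positivity
        rw [Real.norm_eq_abs, abs_of_nonneg hnn]
        calc h t ≤ (α * t ^ (-α - 1) / Real.Gamma (1 - α)) * (t ^ 2 + t ^ 2) := by
              refine mul_le_mul_of_nonneg_left (min_le_left _ _) (by positivity)
          _ = (2 * α / Real.Gamma (1 - α)) * t ^ (1 - α) := by
              field_simp
              nlinarith [hrw, Real.rpow_pos_of_pos ht0 (1-α)]
      · -- on Ioi 1 bound by C * t^(-α-1)
        have hbase : IntegrableOn (fun t : ℝ => (α / Real.Gamma (1 - α)) * t ^ (-α - 1))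
            (Ioi 1) volume :=
          (integrableOn_Ioi_rpow_of_lt (by linarith) one_pos).const_mul _
        refine Integrable.mono' hbase hmeas.aestronglyMeasurable ?_
        filter_upwards [ae_restrict_mem measurableSet_Ioi] with t ht
        have ht0 : (0:ℝ) < t := lt_trans one_pos ht
        have hnn : 0 ≤ h t := by
          apply mul_nonneg
          · positivity
          · positivity
        rw [Real.norm_eq_abs, abs_of_nonneg hnn]
        calc h t ≤ (α * t ^ (-α - 1) / Real.Gamma (1 - α)) * 1 := by
              refine mul_le_mul_of_nonneg_left (min_le_right _ _) (by positivity)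
          _ = (α / Real.Gamma (1 - α)) * t ^ (-α - 1) := by ring
    exact hint.setLIntegral_lt_top
  · -- first marginal
    rw [hνLS, Measure.map_map measurable_fst hT, hνL]
    rfl
  · -- second marginal
    rw [hνLS, Measure.map_map measurable_snd hT]
    have : (Prod.snd ∘ fun p : ℝ × EuclideanSpace ℝ (Fin d) => (p.1 • p.2, p.1))
        = Prod.fst := rfl
    rw [this, Measure.map_fst_prod, measure_univ, one_smul]
end
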